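/- Let f : ℝⁿ → ℝ be differentiable with L-Lipschitz gradient, let x_{i+1} = x_i - η ∇f(x_i) be gradient descent with fixed step size η > 0, and suppose ∇f(x_k) ≠ 0 and ∑_{i=0}^{k-1} ∇f(x_i) ≠ 0, and f(x_0) is the initial value. Define the congruency ν_k = ⟨∇f(x_k), ∑_{i=0}^{k-1}∇f(x_i)⟩ / (‖∇f(x_k)‖·‖∑_{i=0}^{k-1}∇f(x_i)‖). Then ν_k ≥ (1/η) · (f(x_0) - f(x_k) - (Lη²/2)‖∑_{i=0}^{k-1}∇f(x_i)‖²) / (‖∇f(x_k)‖·‖∑_{i=0}^{k-1}∇f(x_i)‖). -/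

import Mathlib

open scoped RealInnerProductSpace

lemma descent_lemma {n : ℕ} (f : EuclideanSpace ℝ (Fin n) → ℝ) (L : ℝ)
    (hf : Differentiable ℝ f)
    (hlip : ∀ a b, ‖gradient f b - gradient f a‖ ≤ L * ‖b - a‖)
    (x y : EuclideanSpace ℝ (Fin n)) :
    f y ≤ f x + ⟪gradient f x, y - x⟫ + L / 2 * ‖y - x‖ ^ 2 := by
  set v := y - x with hv
  have hline : ∀ t : ℝ, HasDerivAt (fun t : ℝ => x + t • v) v t := by
    intro t
    simpa using ((hasDerivAt_id t).smul_const v).const_add x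
  have hphi : ∀ t : ℝ, HasDerivAt (fun t : ℝ => f (x + t • v))
      ⟪gradient f (x + t • v), v⟫ t := by
    intro t
    have hg := (hf (x + t • v)).hasGradientAt
    have hF := (hasGradientAt_iff_hasFDerivAt.mp hg)
    have h := hF.comp_hasDerivAt t (hline t)
    simp only [Function.comp_def] at h
    simpa using h
  set g : ℝ → ℝ := fun t => f (x + t • v) - t * ⟪gradient f x, v⟫ - L * ‖v‖ ^ 2 * t ^ 2 / 2
    with hg
  have hgd : ∀ t : ℝ, HasDerivAt g
      (⟪gradient f (x + t • v), v⟫ - ⟪gradient f x, v⟫ - L * ‖v‖ ^ 2 * t) t := by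
    intro t
    have h1 := (hphi t).sub ((hasDerivAt_id t).mul_const ⟪gradient f x, v⟫)
    have h2 : HasDerivAt (fun t : ℝ => L * ‖v‖ ^ 2 * t ^ 2 / 2) (L * ‖v‖ ^ 2 * t) t := by
      have := ((hasDerivAt_pow 2 t).const_mul (L * ‖v‖ ^ 2)).div_const 2
      refine this.congr_deriv ?_
      ring
    have h3 := h1.sub h2
    simp only [Pi.sub_def] at h3
    simpa [g] using h3
  have hmono : AntitoneOn g (Set.Icc (0:ℝ) 1) := by
    apply antitoneOn_of_deriv_nonpos (convex_Icc 0 1)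
    · have hdg : Differentiable ℝ g := fun t => (hgd t).differentiableAt
      exact hdg.continuous.continuousOn
    · exact fun t _ => ((hgd t).differentiableAt).differentiableWithinAt
    · intro t ht
      rw [interior_Icc] at ht
      rw [(hgd t).deriv]
      have hcs : ⟪gradient f (x + t • v) - gradient f x, v⟫ ≤
          ‖gradient f (x + t • v) - gradient f x‖ * ‖v‖ := real_inner_le_norm _ _
      have hl := hlip x (x + t • v)
      have : ‖x + t • v - x‖ = t * ‖v‖ := by
        rw [add_sub_cancel_left, norm_smul, Real.norm_eq_abs, abs_of_pos ht.1]
      rw [this] at hl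
      have := hcs.trans (mul_le_mul_of_nonneg_right hl (norm_nonneg v))
      rw [inner_sub_left] at this
      nlinarith [norm_nonneg v]
  have := hmono (Set.left_mem_Icc.2 zero_le_one) (Set.right_mem_Icc.2 zero_le_one) zero_le_one
  simp only [g, zero_smul, add_zero, one_smul, zero_pow, one_pow] at this
  have hx1 : x + v = y := by simp [hv]
  rw [hx1] at this
  nlinarith [this]

theorem congruency_basic_lower_bound (n k : ℕ) (f : EuclideanSpace ℝ (Fin n) → ℝ) (L η : ℝ)
    (x : ℕ → EuclideanSpace ℝ (Fin n))
    (hf : Differentiable ℝ f) (hL : 0 ≤ L)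
    (hlip : ∀ a b, ‖gradient f b - gradient f a‖ ≤ L * ‖b - a‖)
    (hη : 0 < η)
    (hstep : ∀ i, x (i + 1) = x i - η • gradient f (x i))
    (hgk : gradient f (x k) ≠ 0)
    (hsum : ∑ i ∈ Finset.range k, gradient f (x i) ≠ 0) :
    ⟪gradient f (x k), ∑ i ∈ Finset.range k, gradient f (x i)⟫ /
        (‖gradient f (x k)‖ * ‖∑ i ∈ Finset.range k, gradient f (x i)‖) ≥
      (1 / η) *
        ((f (x 0) - f (x k) - L * η ^ 2 / 2 * ‖∑ i ∈ Finset.range k, gradient f (x i)‖ ^ 2) /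
          (‖gradient f (x k)‖ * ‖∑ i ∈ Finset.range k, gradient f (x i)‖)) := by
  set S := ∑ i ∈ Finset.range k, gradient f (x i) with hS
  have hxm : ∀ m, x m = x 0 - η • ∑ i ∈ Finset.range m, gradient f (x i) := by
    intro m
    induction m with
    | zero => simp
    | succ m ih =>
      rw [hstep m, Finset.sum_range_succ, smul_add]
      rw [ih]
      abel
  have hdiff : x 0 - x k = η • S := by
    rw [hxm k]; abel
  have hdesc := descent_lemma f L hf hlip (x k) (x 0)
  rw [hdiff] at hdesc
  rw [real_inner_smul_right, norm_smul, Real.norm_eq_abs, abs_of_pos hη] at hdesc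
  set P := ⟪gradient f (x k), S⟫ with hP
  have key : f (x 0) - f (x k) - L * η ^ 2 / 2 * ‖S‖ ^ 2 ≤ η * P := by nlinarith [hdesc]
  have hD : 0 < ‖gradient f (x k)‖ * ‖S‖ :=
    mul_pos (norm_pos_iff.mpr hgk) (norm_pos_iff.mpr hsum)
  rw [ge_iff_le, show (1 / η) * ((f (x 0) - f (x k) - L * η ^ 2 / 2 * ‖S‖ ^ 2) /
      (‖gradient f (x k)‖ * ‖S‖)) =
      ((1 / η) * (f (x 0) - f (x k) - L * η ^ 2 / 2 * ‖S‖ ^ 2)) / (‖gradient f (x k)‖ * ‖S‖)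
    from by ring]
  refine div_le_div_of_nonneg_right ?_ hD.le
  rw [one_div, inv_mul_le_iff₀ hη]
  linarith [key]
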